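/- arXiv:2001.08597 — 2 statements merged into one kernel-verified Lean document; each statement's English description precedes it below -/
import Mathlib

section
/- Let q0 > 0, let q₊, q₋ ∈ ℂ with |q₊| = |q₋| = q0, let Q± be the 2×2 complex matrices with rows (0, q±) and (−conj(q±), 0), and let z ∈ ℂ, z ≠ 0. Let A, B, Â, B̂, S, Ŝ be 2×2 complex matrices with B and B̂ invertible, A = B·S, Â = B̂·Ŝ, A = −(i/z)·Â·σ3·Q₊, and B = −(i/z)·B̂·σ3·Q₋. Then σ3·Q₋ is invertible and S = (σ3 Q₋)⁻¹ · Ŝ · σ3 Q₊. (This is the symmetry S(z) = (σ3 Q₋)⁻¹ S(−q0²/z) σ3 Q₊, with A, B the Jost matrices at z and Â, B̂ the Jost matrices at −q0²/z.) -/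
open Complex Matrix

/-- The Pauli matrix `σ3 = diag(1, −1)`. -/
def σ3 : Matrix (Fin 2) (Fin 2) ℂ := !![1, 0; 0, -1]

theorem stmt_11 (q0 : ℝ) (hq0 : 0 < q0)
    (qp qm : ℂ) (hqp : ‖qp‖ = q0) (hqm : ‖qm‖ = q0)
    (Qp Qm : Matrix (Fin 2) (Fin 2) ℂ)
    (hQp : Qp = !![0, qp; -(starRingEnd ℂ qp), 0])
    (hQm : Qm = !![0, qm; -(starRingEnd ℂ qm), 0])
    (z : ℂ) (hz : z ≠ 0)
    (A B Ah Bh S Sh : Matrix (Fin 2) (Fin 2) ℂ)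
    (hB : IsUnit B) (hBh : IsUnit Bh)
    (hA : A = B * S) (hAh : Ah = Bh * Sh)
    (h1 : A = (-(I / z)) • (Ah * (σ3 * Qp)))
    (h2 : B = (-(I / z)) • (Bh * (σ3 * Qm))) :
    IsUnit (σ3 * Qm) ∧ S = (σ3 * Qm)⁻¹ * Sh * (σ3 * Qp) := by
  have hqm0 : qm ≠ 0 := by
    intro h
    rw [h] at hqm
    simp at hqm
    exact hq0.ne' hqm.symm
  have hdet : (σ3 * Qm).det ≠ 0 := by
    rw [hQm, Matrix.det_mul]
    simp [σ3, Matrix.det_fin_two, hqm0]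
  have hU : IsUnit (σ3 * Qm) := isUnit_iff_isUnit_det _ |>.mpr (isUnit_iff_ne_zero.mpr hdet)
  refine ⟨hU, ?_⟩
  have hc : (-(I / z)) ≠ 0 := by
    simp [div_eq_zero_iff, I_ne_zero, hz]
  -- key equation
  have key : Bh * ((σ3 * Qm) * S) = Bh * (Sh * (σ3 * Qp)) := by
    have := hA
    rw [h1, hAh, h2] at this
    have h3 : (-(I / z)) • (Bh * (σ3 * Qm) * S) = (-(I / z)) • (Bh * Sh * (σ3 * Qp)) := by
      rw [← Matrix.smul_mul, ← this, Matrix.mul_assoc]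
    have h4 := smul_right_injective (Matrix (Fin 2) (Fin 2) ℂ) hc h3
    rw [Matrix.mul_assoc] at h4
    rw [h4, Matrix.mul_assoc]
  have key2 : (σ3 * Qm) * S = Sh * (σ3 * Qp) := by
    exact hBh.mul_left_cancel key
  calc S = (σ3 * Qm)⁻¹ * ((σ3 * Qm) * S) := by
          rw [← Matrix.mul_assoc, Matrix.nonsing_inv_mul _ (isUnit_iff_ne_zero.mpr hdet), Matrix.one_mul]
    _ = (σ3 * Qm)⁻¹ * Sh * (σ3 * Qp) := by rw [key2, Matrix.mul_assoc]
end

section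
/- Let U : ℝ → Matrix (Fin 2) (Fin 2) ℂ be continuous, and let u, v : ℝ → ℂ² be differentiable solutions of the linear system y'(x) = U(x)·y(x). Suppose there exists x₀ ∈ ℝ with v(x₀) ≠ 0 and Wr(u(x₀), v(x₀)) = 0. Then there exists a constant c ∈ ℂ such that u(x) = c·v(x) for all x ∈ ℝ. -/
open Matrix Set

/-- The Wronskian of two vectors in ℂ²: `Wr(u,v) = u1 v2 − u2 v1`. -/
def Wr (u v : Fin 2 → ℂ) : ℂ := u 0 * v 1 - u 1 * v 0

theorem stmt_15 (U : ℝ → Matrix (Fin 2) (Fin 2) ℂ) (hU : Continuous U)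
    (u v : ℝ → Fin 2 → ℂ)
    (hu : ∀ x i, HasDerivAt (fun y => u y i) ((U x).mulVec (u x) i) x)
    (hv : ∀ x i, HasDerivAt (fun y => v y i) ((U x).mulVec (v x) i) x)
    (x0 : ℝ) (hv0 : v x0 ≠ 0) (hW : Wr (u x0) (v x0) = 0) :
    ∃ c : ℂ, ∀ x, u x = c • v x := by
  -- Step 1: find c with u x0 = c • v x0
  have hW' : u x0 0 * v x0 1 = u x0 1 * v x0 0 := by
    have := hW; unfold Wr at this; linear_combination this
  obtain ⟨c, hc⟩ : ∃ c : ℂ, u x0 = c • v x0 := by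
    rcases (by
      by_contra h
      push_neg at h
      exact hv0 (funext fun i => by fin_cases i <;> simp [h.1, h.2]) :
      v x0 0 ≠ 0 ∨ v x0 1 ≠ 0) with h0 | h1
    · refine ⟨u x0 0 / v x0 0, funext fun i => ?_⟩
      fin_cases i <;> simp only [Pi.smul_apply, smul_eq_mul] <;> field_simp
      exacts [rfl, hW'.symm]
    · refine ⟨u x0 1 / v x0 1, funext fun i => ?_⟩
      fin_cases i <;> simp only [Pi.smul_apply, smul_eq_mul] <;> field_simp
      exacts [hW', rfl]
  refine ⟨c, fun x => ?_⟩
  -- Step 2: w = u - c • v solves the ODE with w x0 = 0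
  set w : ℝ → Fin 2 → ℂ := fun t => u t - c • v t with hw
  have hw0 : w x0 = 0 := by simp [hw, hc]
  have hw' : ∀ t, HasDerivAt w ((U t).mulVec (w t)) t := by
    intro t
    rw [hasDerivAt_pi]
    intro i
    have : HasDerivAt (fun y => u y i - c * v y i)
        ((U t).mulVec (u t) i - c * (U t).mulVec (v t) i) t :=
      (hu t i).sub ((hv t i).const_mul c)
    convert this using 1
    · rfl
    all_goals simp [hw, Matrix.mulVec_sub, Matrix.mulVec_smul]
    fin_cases i <;> simp
  -- Step 3: uniqueness via Grönwall on a compact interval containing x and x0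
  suffices hwx : w x = 0 by
    have : u x - c • v x = 0 := hwx
    rwa [sub_eq_zero] at this
  -- linear vector field as continuous linear maps
  set L : Matrix (Fin 2) (Fin 2) ℂ →ₗ[ℂ] ((Fin 2 → ℂ) →L[ℂ] (Fin 2 → ℂ)) :=
    (LinearMap.toContinuousLinearMap : ((Fin 2 → ℂ) →ₗ[ℂ] (Fin 2 → ℂ)) ≃ₗ[ℂ] _).toLinearMap
      ∘ₗ (Matrix.toLin' : Matrix (Fin 2) (Fin 2) ℂ ≃ₗ[ℂ] _).toLinearMap with hL
  have hA : Continuous fun t => L (U t) := L.continuous_of_finiteDimensional.comp hU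
  have hLapp : ∀ t y, L (U t) y = (U t).mulVec y := by
    intro t y
    simp [hL, Matrix.toLin'_apply]
  set a : ℝ := min x x0 - 1 with ha
  set b : ℝ := max x x0 + 1 with hb
  have hab : a < b := by
    have := min_le_max (a := x) (b := x0)
    show min x x0 - 1 < max x x0 + 1
    linarith
  have hx0 : x0 ∈ Ioo a b := by
    refine ⟨?_, ?_⟩
    · show min x x0 - 1 < x0; linarith [min_le_right x x0]
    · show x0 < max x x0 + 1; linarith [le_max_right x x0]
  have hxm : x ∈ Icc a b := by
    refine ⟨?_, ?_⟩
    · show min x x0 - 1 ≤ x; linarith [min_le_left x x0]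
    · show x ≤ max x x0 + 1; linarith [le_max_left x x0]
  obtain ⟨t₁, -, hK⟩ := (isCompact_Icc (a := a) (b := b)).exists_isMaxOn
    (nonempty_Icc.mpr hab.le) (by fun_prop : ContinuousOn (fun t => ‖L (U t)‖) (Icc a b))
  rw [isMaxOn_iff] at hK
  set K : NNReal := ‖L (U t₁)‖₊ with hKdef
  set F : ℝ → (Fin 2 → ℂ) → (Fin 2 → ℂ) :=
    fun t y => L (U (projIcc a b hab.le t)) y with hF
  have hlip : ∀ t, LipschitzWith K (F t) := by
    intro t
    exact (L (U (projIcc a b hab.le t))).lipschitz.weaken <| by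
      simpa [hKdef, ← NNReal.coe_le_coe] using hK _ (projIcc a b hab.le t).2
  have hFeq : ∀ t ∈ Ioo a b, F t (w t) = (U t).mulVec (w t) := by
    intro t ht
    have hp : ((projIcc a b hab.le t : Icc a b) : ℝ) = t :=
      congrArg Subtype.val (projIcc_of_mem hab.le (Ioo_subset_Icc_self ht))
    simp only [hF, hp, hLapp]
  have hzero := ODE_solution_unique_of_mem_Icc
    (v := F) (s := fun _ => univ) (K := K) (fun t _ => (hlip t).lipschitzOnWith)
    hx0
    (fun t _ => (hw' t).continuousAt.continuousWithinAt)
    (fun t ht => by rw [hFeq t ht]; exact hw' t)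
    (fun _ _ => mem_univ _)
    (continuousOn_const (c := (0 : Fin 2 → ℂ)))
    (fun t ht => by
      simpa [hF] using (hasDerivAt_const t (0 : Fin 2 → ℂ)))
    (fun _ _ => mem_univ _)
    (by simp [hw0])
  exact hzero hxm
end
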